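/- Let v : ℝ × ℝ → ℝ be a smooth function of (x,t) with v_xx(x,t) ≠ 0 for all (x,t), satisfying the evolution equation v_t = −1/v_xx. Define η : ℝ × ℝ → ℝ by η = v_xxx / v_xx³. Then η satisfies the linearized equation ∂η/∂t = ( 1/v_xx² )·∂²η/∂x² at every point (x,t). -/

import Mathlib

/-- Partial derivative with respect to the first (space) variable. -/
noncomputable def pdx (f : ℝ × ℝ → ℝ) : ℝ × ℝ → ℝ :=
  fun p => deriv (fun x => f (x, p.2)) p.1

/-- Partial derivative with respect to the second (time) variable. -/
noncomputable def pdt (f : ℝ × ℝ → ℝ) : ℝ × ℝ → ℝ :=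
  fun p => deriv (fun t => f (p.1, t)) p.2

section aux
variable {f : ℝ × ℝ → ℝ}

lemma sliceX_diffAt (hf : ContDiff ℝ (⊤ : ℕ∞) f) (p : ℝ × ℝ) :
    DifferentiableAt ℝ (fun x => f (x, p.2)) p.1 :=
  ((hf.differentiable (by simp)) (p.1, p.2)).comp p.1
    (differentiableAt_id.prodMk (differentiableAt_const _))

lemma sliceT_diffAt (hf : ContDiff ℝ (⊤ : ℕ∞) f) (p : ℝ × ℝ) :
    DifferentiableAt ℝ (fun t => f (p.1, t)) p.2 :=
  ((hf.differentiable (by simp)) (p.1, p.2)).comp p.2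
    ((differentiableAt_const _).prodMk differentiableAt_id)

lemma sliceX_hasDerivAt (hf : ContDiff ℝ (⊤ : ℕ∞) f) (p : ℝ × ℝ) :
    HasDerivAt (fun x => f (x, p.2)) (pdx f p) p.1 :=
  (sliceX_diffAt hf p).hasDerivAt

lemma sliceT_hasDerivAt (hf : ContDiff ℝ (⊤ : ℕ∞) f) (p : ℝ × ℝ) :
    HasDerivAt (fun t => f (p.1, t)) (pdt f p) p.2 :=
  (sliceT_diffAt hf p).hasDerivAt

lemma pdx_eq_fderiv (hf : ContDiff ℝ (⊤ : ℕ∞) f) (p : ℝ × ℝ) :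
    pdx f p = fderiv ℝ f p ((1 : ℝ), (0 : ℝ)) := by
  obtain ⟨a, b⟩ := p
  have h : HasDerivAt (fun x => f (x, b)) (fderiv ℝ f (a, b) ((1 : ℝ), (0 : ℝ))) a :=
    ((hf.differentiable (by simp)) (a, b)).hasFDerivAt.comp_hasDerivAt a
      ((hasDerivAt_id a).prodMk (hasDerivAt_const a b))
  exact h.deriv

lemma pdt_eq_fderiv (hf : ContDiff ℝ (⊤ : ℕ∞) f) (p : ℝ × ℝ) :
    pdt f p = fderiv ℝ f p ((0 : ℝ), (1 : ℝ)) := by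
  obtain ⟨a, b⟩ := p
  have h : HasDerivAt (fun t => f (a, t)) (fderiv ℝ f (a, b) ((0 : ℝ), (1 : ℝ))) b :=
    ((hf.differentiable (by simp)) (a, b)).hasFDerivAt.comp_hasDerivAt b
      ((hasDerivAt_const b a).prodMk (hasDerivAt_id b))
  exact h.deriv

lemma contDiff_pdx (hf : ContDiff ℝ (⊤ : ℕ∞) f) : ContDiff ℝ (⊤ : ℕ∞) (pdx f) := by
  have h : pdx f = fun p => fderiv ℝ f p ((1 : ℝ), (0 : ℝ)) := funext (pdx_eq_fderiv hf)
  rw [h]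
  exact (hf.fderiv_right (m := (⊤ : ℕ∞)) (by simp)).clm_apply contDiff_const

lemma contDiff_pdt (hf : ContDiff ℝ (⊤ : ℕ∞) f) : ContDiff ℝ (⊤ : ℕ∞) (pdt f) := by
  have h : pdt f = fun p => fderiv ℝ f p ((0 : ℝ), (1 : ℝ)) := funext (pdt_eq_fderiv hf)
  rw [h]
  exact (hf.fderiv_right (m := (⊤ : ℕ∞)) (by simp)).clm_apply contDiff_const

lemma pdt_pdx_comm (hf : ContDiff ℝ (⊤ : ℕ∞) f) : pdt (pdx f) = pdx (pdt f) := by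
  funext p
  have hd : Differentiable ℝ (fderiv ℝ f) :=
    (hf.fderiv_right (m := (⊤ : ℕ∞)) (by simp)).differentiable (by simp)
  have e1 : pdx f = fun q => fderiv ℝ f q ((1 : ℝ), (0 : ℝ)) := funext (pdx_eq_fderiv hf)
  have e2 : pdt f = fun q => fderiv ℝ f q ((0 : ℝ), (1 : ℝ)) := funext (pdt_eq_fderiv hf)
  rw [pdt_eq_fderiv (contDiff_pdx hf), pdx_eq_fderiv (contDiff_pdt hf), e1, e2,
    fderiv_clm_apply (hd p) (differentiableAt_const _),
    fderiv_clm_apply (hd p) (differentiableAt_const _)]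
  simp only [fderiv_fun_const, Pi.zero_apply, ContinuousLinearMap.comp_zero,
    ContinuousLinearMap.zero_apply, zero_add, ContinuousLinearMap.add_apply,
    ContinuousLinearMap.flip_apply]
  exact (hf.contDiffAt.isSymmSndFDerivAt (by rw [minSmoothness_of_isRCLikeNormedField]; exact WithTop.coe_le_coe.2 le_top)).eq _ _

end aux

section key
variable {f : ℝ × ℝ → ℝ}

lemma sliceX' (hf : ContDiff ℝ (⊤ : ℕ∞) f) (a b : ℝ) :
    HasDerivAt (fun x => f (x, b)) (pdx f (a, b)) a :=
  sliceX_hasDerivAt hf (a, b)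

lemma sliceT' (hf : ContDiff ℝ (⊤ : ℕ∞) f) (a b : ℝ) :
    HasDerivAt (fun t => f (a, t)) (pdt f (a, b)) b :=
  sliceT_hasDerivAt hf (a, b)

lemma key (w : ℝ × ℝ → ℝ) (hw : ContDiff ℝ (⊤ : ℕ∞) w) (hw0 : ∀ p, w p ≠ 0)
    (hwt : pdt w = pdx (pdx (fun q => -1 / w q))) :
    ∀ p : ℝ × ℝ, pdt (fun q => pdx w q / (w q) ^ 3) p
      = (1 / (w p) ^ 2) * pdx (pdx (fun q => pdx w q / (w q) ^ 3)) p := by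
  have hu1 : ContDiff ℝ (⊤ : ℕ∞) (pdx w) := contDiff_pdx hw
  have hu2 : ContDiff ℝ (⊤ : ℕ∞) (pdx (pdx w)) := contDiff_pdx hu1
  -- first x-derivative of -1/w
  have C0 : pdx (fun q => -1 / w q) = fun q => pdx w q / (w q * w q) := by
    funext q; obtain ⟨a, b⟩ := q
    exact ((hasDerivAt_const a (-1 : ℝ)).div (sliceX' hw a b) (hw0 (a, b))).deriv.trans
      (by ring)
  -- second x-derivative of -1/w
  have C1 : pdx (fun q => pdx w q / (w q * w q)) =
      fun q => (pdx (pdx w) q * w q - 2 * (pdx w q * pdx w q)) / (w q * (w q * w q)) := by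
    funext q; obtain ⟨a, b⟩ := q
    exact ((sliceX' hu1 a b).div ((sliceX' hw a b).mul (sliceX' hw a b))
      (mul_ne_zero (hw0 (a, b)) (hw0 (a, b)))).deriv.trans
      (by simp only [Pi.mul_apply, Pi.pow_apply]; field_simp [hw0 (a, b)]; ring)
  have e_wt : pdt w =
      fun q => (pdx (pdx w) q * w q - 2 * (pdx w q * pdx w q)) / (w q * (w q * w q)) := by
    rw [hwt, C0, C1]
  -- rewrite eta in product form
  have eη : (fun q => pdx w q / (w q) ^ 3) =
      fun q => pdx w q / (w q * (w q * w q)) := by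
    funext q; ring
  -- x-derivative of eta
  have C2 : pdx (fun q => pdx w q / (w q * (w q * w q))) =
      fun q => (pdx (pdx w) q * w q - 3 * (pdx w q * pdx w q)) /
        (w q * (w q * (w q * w q))) := by
    funext q; obtain ⟨a, b⟩ := q
    exact ((sliceX' hu1 a b).div ((sliceX' hw a b).mul ((sliceX' hw a b).mul
      (sliceX' hw a b))) (mul_ne_zero (hw0 (a, b)) (mul_ne_zero (hw0 (a, b))
      (hw0 (a, b))))).deriv.trans (by simp only [Pi.mul_apply, Pi.pow_apply]; field_simp [hw0 (a, b)]; ring)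
  intro p; obtain ⟨a, b⟩ := p
  have h0 : w (a, b) ≠ 0 := hw0 (a, b)
  -- commutation : pdt (pdx w) = pdx T
  have ecomm : pdt (pdx w) =
      pdx (fun q => (pdx (pdx w) q * w q - 2 * (pdx w q * pdx w q)) / (w q * (w q * w q))) :=
    (pdt_pdx_comm hw).trans (by rw [e_wt])
  -- x-derivative of T at (a,b)
  have hT := (((sliceX' hu2 a b).mul (sliceX' hw a b)).sub
      (((sliceX' hu1 a b).mul (sliceX' hu1 a b)).const_mul (2 : ℝ))).div
      ((sliceX' hw a b).mul ((sliceX' hw a b).mul (sliceX' hw a b)))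
      (mul_ne_zero h0 (mul_ne_zero h0 h0))
  -- x-derivative of G at (a,b)
  have hG := (((sliceX' hu2 a b).mul (sliceX' hw a b)).sub
      (((sliceX' hu1 a b).mul (sliceX' hu1 a b)).const_mul (3 : ℝ))).div
      ((sliceX' hw a b).mul ((sliceX' hw a b).mul ((sliceX' hw a b).mul (sliceX' hw a b))))
      (mul_ne_zero h0 (mul_ne_zero h0 (mul_ne_zero h0 h0)))
  -- t-derivative of eta at (a,b)
  have hL := (sliceT' hu1 a b).div ((sliceT' hw a b).mul ((sliceT' hw a b).mul
      (sliceT' hw a b))) (mul_ne_zero h0 (mul_ne_zero h0 h0))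
  rw [eη, C2]
  rw [show pdt (fun q => pdx w q / (w q * (w q * w q))) (a, b) = _ from hL.deriv]
  rw [show pdx (fun q => (pdx (pdx w) q * w q - 3 * (pdx w q * pdx w q)) /
        (w q * (w q * (w q * w q)))) (a, b) = _ from hG.deriv]
  rw [ecomm]
  rw [show pdx (fun q => (pdx (pdx w) q * w q - 2 * (pdx w q * pdx w q)) /
        (w q * (w q * w q))) (a, b) = _ from hT.deriv]
  rw [e_wt]
  beta_reduce
  simp only [Pi.mul_apply, Pi.pow_apply, Pi.sub_apply]
  field_simp
  ring

end key

/-- Case 2: for a solution of `v_t = −1/v_xx`, the function `η = v_xxx / v_xx³`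
satisfies the linearized (Lie–Bäcklund symmetry) equation. -/
theorem case2_third_order_symmetry
    (v : ℝ × ℝ → ℝ) (hv : ContDiff ℝ (⊤ : ℕ∞) v)
    (hvxx : ∀ p : ℝ × ℝ, pdx (pdx v) p ≠ 0)
    (heq : ∀ p : ℝ × ℝ, pdt v p = -1 / pdx (pdx v) p)
    (η : ℝ × ℝ → ℝ)
    (hη : η = fun p => pdx (pdx (pdx v)) p / (pdx (pdx v) p) ^ 3) :
    ∀ p : ℝ × ℝ, pdt η p = (1 / (pdx (pdx v) p) ^ 2) * pdx (pdx η) p := by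
  have e0 : pdt v = fun q => -1 / pdx (pdx v) q := funext heq
  have hwt : pdt (pdx (pdx v)) = pdx (pdx (fun q => -1 / pdx (pdx v) q)) := by
    rw [pdt_pdx_comm (contDiff_pdx hv), pdt_pdx_comm hv, e0]
  rw [hη]
  exact key (pdx (pdx v)) (contDiff_pdx (contDiff_pdx hv)) hvxx hwt
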